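/- Let w ∈ Δ be a non-unstable equilibrium, i.e. ∂L/∂v_i(w) = 0 for every i with w_i > 0 and ∂L/∂v_i(w) ≤ 0 for every i with w_i = 0, and let f(v) = −1 + (1/N) Σ_{{i,j}∈E} (w_i + w_j)/(v_i + v_j). If v ∈ Δ satisfies f(v) = 0 (i.e. v is also a global minimum of f on Δ), then v_i + v_j = w_i + w_j for every edge {i,j} ∈ E. -/

import Mathlib

open Finset

/-- `v_i + v_j` as a function of the unordered pair `{i,j}`. -/
noncomputable def pairSum {m : ℕ} (v : Fin m → ℝ) : Sym2 (Fin m) → ℝ :=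
  Sym2.lift ⟨fun i j => v i + v j, fun i j => add_comm (v i) (v j)⟩

/-- The domain `Δ`. -/
def urnDomain {m : ℕ} (G : SimpleGraph (Fin m)) (c : ℝ) : Set (Fin m → ℝ) :=
  {v | (∀ i, 0 ≤ v i) ∧ (∑ i, v i) = 1 ∧ ∀ i j, G.Adj i j → c ≤ v i + v j}

/-- `∂L/∂v_i (v) = -1 + (1/N) Σ_{j ∼ i} 1/(v_i + v_j)`. -/
noncomputable def dLyap {m : ℕ} (G : SimpleGraph (Fin m)) [DecidableRel G.Adj] (N : ℕ)
    (i : Fin m) (v : Fin m → ℝ) : ℝ :=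
  -1 + (1 / (N : ℝ)) * ∑ j ∈ G.neighborFinset i, 1 / (v i + v j)

lemma sym2_sum_eq_aux {m : ℕ} (G : SimpleGraph (Fin m)) [DecidableRel G.Adj]
    (F : Sym2 (Fin m) → ℝ) :
    ∑ i, ∑ j ∈ G.neighborFinset i, F s(i,j) = 2 * ∑ e ∈ G.edgeFinset, F e := by
  classical
  let eqv : (Σ v : Fin m, G.neighborSet v) ≃ G.Dart :=
    { toFun := fun s => ⟨(s.fst, s.snd), s.snd.property⟩
      invFun := fun d => ⟨d.fst, d.snd, d.adj⟩
      left_inv := fun s => by ext <;> simp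
      right_inv := fun d => by ext <;> simp }
  have h1 : ∑ d : G.Dart, F d.edge = ∑ i, ∑ j ∈ G.neighborFinset i, F s(i,j) := by
    rw [← Equiv.sum_comp eqv (fun d => F d.edge), ← Finset.univ_sigma_univ, Finset.sum_sigma]
    refine Finset.sum_congr rfl fun i _ => ?_
    rw [SimpleGraph.neighborFinset_def, ← Finset.sum_set_coe]
    exact Finset.sum_congr rfl fun j _ => rfl
  have hmaps : ∀ d ∈ (Finset.univ : Finset G.Dart), d.edge ∈ G.edgeFinset := fun d _ => by
    rw [SimpleGraph.mem_edgeFinset]; exact d.edge_mem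
  have h2 : ∑ d : G.Dart, F d.edge = ∑ e ∈ G.edgeFinset, 2 * F e := by
    rw [← Finset.sum_fiberwise_of_maps_to hmaps]
    refine Finset.sum_congr rfl fun e he => ?_
    rw [Finset.sum_congr rfl (fun d hd => by rw [(Finset.mem_filter.mp hd).2]),
      Finset.sum_const, G.dart_edge_fiber_card e (SimpleGraph.mem_edgeFinset.mp he)]
    simp [mul_comm]
  rw [← h1, h2, Finset.mul_sum]

lemma swap_sum_aux {m : ℕ} (G : SimpleGraph (Fin m)) [DecidableRel G.Adj]
    (g : Fin m → Fin m → ℝ) :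
    ∑ i, ∑ j ∈ G.neighborFinset i, g i j = ∑ i, ∑ j ∈ G.neighborFinset i, g j i := by
  rw [Finset.sum_comm' (s' := fun j => G.neighborFinset j) (t' := Finset.univ)]
  intro i j
  simp [SimpleGraph.adj_comm]

/-- If `w ∈ Δ` is a non-unstable equilibrium,
`f(v) = -1 + (1/N) Σ_{{i,j} ∈ E} (w_i + w_j)/(v_i + v_j)`, and `v ∈ Δ` satisfies `f(v) = 0`
(i.e. `v` is also a global minimum of `f` on `Δ`), then `v_i + v_j = w_i + w_j` for every edge
`{i,j} ∈ E`. -/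
theorem global_min_pair_sums_agree
    {m : ℕ} (hm : 2 ≤ m) (G : SimpleGraph (Fin m)) [DecidableRel G.Adj]
    (hconn : G.Connected)
    (N : ℕ) (hN : N = G.edgeFinset.card)
    (c : ℝ) (hc0 : 0 < c) (hc1 : c < 1 / (N : ℝ))
    (w : Fin m → ℝ) (hwΔ : w ∈ urnDomain G c)
    (hw1 : ∀ i, 0 < w i → dLyap G N i w = 0)
    (hw2 : ∀ i, w i = 0 → dLyap G N i w ≤ 0)
    (f : (Fin m → ℝ) → ℝ)
    (hf : ∀ v, f v = -1 + (1 / (N : ℝ)) * ∑ e ∈ G.edgeFinset, pairSum w e / pairSum v e)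
    (v : Fin m → ℝ) (hvΔ : v ∈ urnDomain G c) (hfv : f v = 0) :
    ∀ i j, G.Adj i j → v i + v j = w i + w j := by
  classical
  obtain ⟨hw0, hwsum, hwc⟩ := hwΔ
  obtain ⟨hv0, hvsum, hvc⟩ := hvΔ
  have hNpos : 0 < (N : ℝ) := by
    by_contra h
    push_neg at h
    rw [one_div] at hc1
    have : (N : ℝ)⁻¹ ≤ 0 := inv_nonpos.mpr h
    linarith
  have hNne : (N : ℝ) ≠ 0 := ne_of_gt hNpos
  -- positivity on edges
  have hwpos : ∀ e ∈ G.edgeFinset, 0 < pairSum w e := by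
    intro e he
    induction e with
    | _ i j =>
      rw [SimpleGraph.mem_edgeFinset, SimpleGraph.mem_edgeSet] at he
      have := hwc i j he
      simp only [pairSum, Sym2.lift_mk]
      linarith
  have hvpos : ∀ e ∈ G.edgeFinset, 0 < pairSum v e := by
    intro e he
    induction e with
    | _ i j =>
      rw [SimpleGraph.mem_edgeFinset, SimpleGraph.mem_edgeSet] at he
      have := hvc i j he
      simp only [pairSum, Sym2.lift_mk]
      linarith
  -- S_i ≤ N for all i
  have hS : ∀ i, ∑ j ∈ G.neighborFinset i, 1 / (w i + w j) ≤ (N : ℝ) := by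
    intro i
    set S := ∑ j ∈ G.neighborFinset i, 1 / (w i + w j) with hSdef
    rcases eq_or_lt_of_le (hw0 i) with h | h
    · have h1 := hw2 i h.symm
      rw [dLyap, ← hSdef] at h1
      have h2 : (1 / (N:ℝ)) * S ≤ 1 := by linarith
      rw [div_mul_eq_mul_div, one_mul, div_le_one hNpos] at h2
      exact h2
    · have h1 := hw1 i h
      rw [dLyap, ← hSdef] at h1
      have h2 : (1 / (N:ℝ)) * S = 1 := by linarith
      rw [div_mul_eq_mul_div, one_mul, div_eq_one_iff_eq hNne] at h2
      rw [h2]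
  -- sum of v_e/w_e ≤ N
  have key1 : ∑ e ∈ G.edgeFinset, pairSum v e / pairSum w e ≤ (N : ℝ) := by
    have h2 : 2 * ∑ e ∈ G.edgeFinset, pairSum v e / pairSum w e
        = ∑ i, ∑ j ∈ G.neighborFinset i, (v i + v j) / (w i + w j) := by
      rw [← sym2_sum_eq_aux G (fun e => pairSum v e / pairSum w e)]
      exact Finset.sum_congr rfl fun i _ => Finset.sum_congr rfl fun j _ => by
        simp [pairSum]
    have hsplit : ∑ i, ∑ j ∈ G.neighborFinset i, (v i + v j) / (w i + w j)
        = 2 * ∑ i, v i * ∑ j ∈ G.neighborFinset i, 1 / (w i + w j) := by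
      have e1 : ∀ i j : Fin m, (v i + v j) / (w i + w j)
          = v i / (w i + w j) + v j / (w i + w j) := fun i j => add_div _ _ _
      simp_rw [e1, Finset.sum_add_distrib]
      rw [swap_sum_aux G (fun i j => v j / (w i + w j))]
      have e2 : ∀ i, ∑ j ∈ G.neighborFinset i, v i / (w j + w i)
          = ∑ j ∈ G.neighborFinset i, v i / (w i + w j) := fun i =>
        Finset.sum_congr rfl fun j _ => by rw [add_comm]
      simp_rw [e2]
      have e3 : ∀ i, ∑ j ∈ G.neighborFinset i, v i / (w i + w j)
          = v i * ∑ j ∈ G.neighborFinset i, 1 / (w i + w j) := fun i => by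
        rw [Finset.mul_sum]
        exact Finset.sum_congr rfl fun j _ => by rw [div_eq_mul_one_div]
      simp_rw [e3]
      ring
    have hbound : ∑ i, v i * ∑ j ∈ G.neighborFinset i, 1 / (w i + w j) ≤ (N : ℝ) := by
      calc ∑ i, v i * ∑ j ∈ G.neighborFinset i, 1 / (w i + w j)
          ≤ ∑ i, v i * N := by
            refine Finset.sum_le_sum fun i _ => mul_le_mul_of_nonneg_left (hS i) (hv0 i)
        _ = (N : ℝ) := by rw [← Finset.sum_mul, hvsum, one_mul]
    nlinarith [h2, hsplit, hbound]
  -- sum of w_e/v_e = N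
  have key2 : ∑ e ∈ G.edgeFinset, pairSum w e / pairSum v e = (N : ℝ) := by
    rw [hf v] at hfv
    have : (1 / (N:ℝ)) * ∑ e ∈ G.edgeFinset, pairSum w e / pairSum v e = 1 := by linarith
    rw [div_mul_eq_mul_div, one_mul, div_eq_one_iff_eq hNne] at this
    exact this
  -- each term equality
  have hterm : ∀ e ∈ G.edgeFinset,
      0 ≤ pairSum w e / pairSum v e + pairSum v e / pairSum w e - 2 := by
    intro e he
    have hw := hwpos e he
    have hv := hvpos e he
    have heq : pairSum w e / pairSum v e + pairSum v e / pairSum w e - 2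
        = (pairSum w e - pairSum v e)^2 / (pairSum w e * pairSum v e) := by
      field_simp
      ring
    rw [heq]
    positivity
  have hsum0 : ∑ e ∈ G.edgeFinset,
      (pairSum w e / pairSum v e + pairSum v e / pairSum w e - 2) ≤ 0 := by
    rw [Finset.sum_sub_distrib, Finset.sum_add_distrib, key2, Finset.sum_const, ← hN]
    simp only [nsmul_eq_mul]
    linarith [key1]
  have hall : ∀ e ∈ G.edgeFinset,
      pairSum w e / pairSum v e + pairSum v e / pairSum w e - 2 = 0 := by
    have := (Finset.sum_eq_zero_iff_of_nonneg hterm).mp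
      (le_antisymm hsum0 (Finset.sum_nonneg hterm))
    exact this
  intro i j hij
  have hmem : s(i, j) ∈ G.edgeFinset := by
    rw [SimpleGraph.mem_edgeFinset, SimpleGraph.mem_edgeSet]; exact hij
  have h := hall _ hmem
  have hw := hwpos _ hmem
  have hv := hvpos _ hmem
  simp only [pairSum, Sym2.lift_mk] at h hw hv
  have : (w i + w j - (v i + v j))^2 = 0 := by
    field_simp at h
    nlinarith [h]
  nlinarith [this]
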